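/- (Kesten–Stigum, one direction) Let (Zₙ) be a supercritical Galton–Watson process with Z₀ = 1, μ = E(Z₁) ∈ (1, ∞), and E(Z₁ log⁺ Z₁) < ∞. Then the martingale limit W = lim Zₙ/μⁿ satisfies E(W) = 1. -/

import Mathlib

open MeasureTheory ProbabilityTheory Filter Topology
open scoped ENNReal

private lemma sqrt_pow' (x : ℝ) (hx : 0 ≤ x) (n : ℕ) :
    Real.sqrt (x ^ n) = (Real.sqrt x) ^ n := by
  induction n with
  | zero => simp
  | succ n ih => rw [pow_succ, pow_succ, Real.sqrt_mul (by positivity), ih]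

set_option maxHeartbeats 2000000 in
/-- **Kesten–Stigum theorem (sufficiency direction).** For a supercritical
Galton–Watson process `Z` with `Z₀ = 1`, mean offspring `μ ∈ (1, ∞)`, and
`E(Z₁ log⁺ Z₁) < ∞`, the almost-sure limit `W` of the martingale `Zₙ / μⁿ`
satisfies `E(W) = 1`. -/
theorem kesten_stigum
    {Ω : Type*} [MeasurableSpace Ω] (P : Measure Ω) [IsProbabilityMeasure P]
    (X : ℕ → ℕ → Ω → ℕ) (μ : ℝ) (hμ : 1 < μ)
    (hmeas : ∀ n i, Measurable (X n i))
    (hindep : iIndepFun (m := fun _ => inferInstance) (fun p : ℕ × ℕ => X p.1 p.2) P)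
    (hident : ∀ n i, IdentDistrib (X n i) (X 0 0) P P)
    (hint : Integrable (fun ω => (X 0 0 ω : ℝ)) P)
    (hmean : ∫ ω, (X 0 0 ω : ℝ) ∂P = μ)
    (hLlogL : Integrable (fun ω => (X 0 0 ω : ℝ) * max (Real.log (X 0 0 ω)) 0) P)
    (Z : ℕ → Ω → ℕ)
    (hZ0 : ∀ ω, Z 0 ω = 1)
    (hZrec : ∀ n ω, Z (n + 1) ω = ∑ i ∈ Finset.range (Z n ω), X n i ω)
    (W : Ω → ℝ)
    (hW : ∀ᵐ ω ∂P, Tendsto (fun n => (Z n ω : ℝ) / μ ^ n) atTop (𝓝 (W ω))) :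
    ∫ ω, W ω ∂P = 1 := by
  have hμ0 : (0:ℝ) < μ := lt_trans one_pos hμ
  set ν : ℝ := Real.sqrt μ with hνdef
  have hνsq : ν ^ 2 = μ := Real.sq_sqrt hμ0.le
  have hν1 : 1 < ν := by
    nlinarith [Real.sqrt_nonneg μ]
  have hν0 : (0:ℝ) < ν := lt_trans one_pos hν1
  have hνμ : ν < μ := by nlinarith
  -- truncation functions
  set φ : ℕ → ℕ → ℝ := fun n k => if (k:ℝ) ≤ ν ^ n then (k:ℝ) else 0 with hφdef
  set ψ : ℕ → ℕ → ℝ := fun n k => if (k:ℝ) ≤ ν ^ n then 0 else (k:ℝ) with hψdef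
  have hφψ : ∀ n k, φ n k + ψ n k = (k:ℝ) := by
    intro n k; by_cases h : (k:ℝ) ≤ ν ^ n <;> simp [hφdef, hψdef, h]
  have hφ0 : ∀ n k, 0 ≤ φ n k := by
    intro n k; by_cases h : (k:ℝ) ≤ ν ^ n <;> simp [hφdef, h, Nat.cast_nonneg]
  have hφle : ∀ n k, φ n k ≤ ν ^ n := by
    intro n k; by_cases h : (k:ℝ) ≤ ν ^ n <;> simp [hφdef, h] <;> positivity
  have hφlek : ∀ n k, φ n k ≤ (k:ℝ) := by
    intro n k; by_cases h : (k:ℝ) ≤ ν ^ n <;> simp [hφdef, h, Nat.cast_nonneg]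
  have hψ0 : ∀ n k, 0 ≤ ψ n k := by
    intro n k; by_cases h : (k:ℝ) ≤ ν ^ n <;> simp [hψdef, h, Nat.cast_nonneg]
  have hψlek : ∀ n k, ψ n k ≤ (k:ℝ) := by
    intro n k; by_cases h : (k:ℝ) ≤ ν ^ n <;> simp [hψdef, h, Nat.cast_nonneg]
  -- identical distribution transfer
  have hident' : ∀ (g : ℕ → ℝ) n i,
      IdentDistrib (fun ω => g (X n i ω)) (fun ω => g (X 0 0 ω)) P P :=
    fun g n i => (hident n i).comp measurable_from_top
  have hXmeasR : ∀ (g : ℕ → ℝ) n i, Measurable (fun ω => g (X n i ω)) :=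
    fun g n i => measurable_from_top.comp (hmeas n i)
  -- integrability of truncations
  have hIphi : ∀ n, Integrable (fun ω => φ n (X 0 0 ω)) P := by
    intro n
    refine Integrable.mono' hint ((hXmeasR (φ n) 0 0).aestronglyMeasurable) ?_
    filter_upwards with ω
    rw [Real.norm_eq_abs, abs_of_nonneg (hφ0 n _)]
    exact hφlek n _
  have hIpsi : ∀ n, Integrable (fun ω => ψ n (X 0 0 ω)) P := by
    intro n
    refine Integrable.mono' hint ((hXmeasR (ψ n) 0 0).aestronglyMeasurable) ?_
    filter_upwards with ω
    rw [Real.norm_eq_abs, abs_of_nonneg (hψ0 n _)]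
    exact hψlek n _
  set em : ℕ → ℝ := fun n => ∫ ω, φ n (X 0 0 ω) ∂P with hemdef
  set eps : ℕ → ℝ := fun n => ∫ ω, ψ n (X 0 0 ω) ∂P with hepsdef
  have heps0 : ∀ n, 0 ≤ eps n := fun n => integral_nonneg (fun ω => hψ0 n _)
  have hem0 : ∀ n, 0 ≤ em n := fun n => integral_nonneg (fun ω => hφ0 n _)
  have hem_add : ∀ n, em n + eps n = μ := by
    intro n
    rw [hemdef, hepsdef, ← integral_add (hIphi n) (hIpsi n)]
    simp only [hφψ]
    exact hmean
  have hem_le : ∀ n, em n ≤ μ := fun n => by have := heps0 n; linarith [hem_add n]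
  have heps_eq : ∀ n, eps n = μ - em n := fun n => by linarith [hem_add n]
  -- summability of eps
  have hepsSummable : Summable eps := by
    have hlogn : 0 < Real.log ν := Real.log_pos hν1
    have hbound_int : Integrable
        (fun ω => (X 0 0 ω : ℝ) * max (Real.log (X 0 0 ω)) 0 / Real.log ν + (X 0 0 ω : ℝ)) P :=
      (hLlogL.div_const _).add hint
    have hpsum : ∀ (N k : ℕ), (∑ n ∈ Finset.range N, ψ n k)
        ≤ (k : ℝ) * max (Real.log k) 0 / Real.log ν + k := by
      intro N k
      rcases Nat.eq_zero_or_pos k with hk | hk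
      · subst hk
        have hz : ∀ n, ψ n 0 = 0 := by
          intro n; simp [hψdef, pow_nonneg hν0.le]
        simp [hz]
      · have hk1 : (1:ℝ) ≤ (k:ℝ) := by exact_mod_cast hk
        have hlogk : 0 ≤ Real.log k := Real.log_nonneg hk1
        set c : ℝ := Real.log k / Real.log ν with hcdef
        have hc0 : 0 ≤ c := div_nonneg hlogk hlogn.le
        have hsub : (Finset.range N).filter (fun n => ¬ ((k:ℝ) ≤ ν ^ n))
            ⊆ Finset.range ⌈c⌉₊ := by
          intro n hn
          simp only [Finset.mem_filter, Finset.mem_range, not_le] at hn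
          have hlt : ν ^ n < (k:ℝ) := hn.2
          have hlog2 : (n : ℝ) * Real.log ν < Real.log k := by
            have := Real.log_lt_log (by positivity) hlt
            rwa [Real.log_pow] at this
          have hnc : (n : ℝ) < c := by
            rw [hcdef, lt_div_iff₀ hlogn]
            exact hlog2
          have hfin : (n : ℝ) < (⌈c⌉₊ : ℝ) := lt_of_lt_of_le hnc (Nat.le_ceil c)
          exact Finset.mem_range.mpr (by exact_mod_cast hfin)
        calc (∑ n ∈ Finset.range N, ψ n k)
            ≤ ∑ n ∈ (Finset.range N).filter (fun n => ¬ ((k:ℝ) ≤ ν ^ n)), (k:ℝ) := by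
              rw [Finset.sum_filter]
              refine Finset.sum_le_sum fun n _ => ?_
              by_cases h : (k:ℝ) ≤ ν ^ n <;> simp [hψdef, h]
          _ = (((Finset.range N).filter (fun n => ¬ ((k:ℝ) ≤ ν ^ n))).card : ℝ) * (k:ℝ) := by
              rw [Finset.sum_const, nsmul_eq_mul]
          _ ≤ (⌈c⌉₊ : ℝ) * (k:ℝ) := by
              refine mul_le_mul_of_nonneg_right ?_ (by positivity)
              have := Finset.card_le_card hsub
              simp only [Finset.card_range] at this
              exact_mod_cast this
          _ ≤ (c + 1) * (k:ℝ) := by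
              refine mul_le_mul_of_nonneg_right ?_ (by positivity)
              exact (Nat.ceil_lt_add_one hc0).le
          _ = (k : ℝ) * max (Real.log k) 0 / Real.log ν + k := by
              rw [hcdef, max_eq_left hlogk]
              field_simp
    refine summable_of_sum_range_le
      (c := ∫ ω, ((X 0 0 ω : ℝ) * max (Real.log (X 0 0 ω)) 0 / Real.log ν + (X 0 0 ω : ℝ)) ∂P)
      (fun n => heps0 n) (fun N => ?_)
    have h1 : (∑ n ∈ Finset.range N, eps n)
        = ∫ ω, ∑ n ∈ Finset.range N, ψ n (X 0 0 ω) ∂P := by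
      rw [hepsdef, integral_finset_sum _ (fun n _ => hIpsi n)]
    rw [h1]
    refine integral_mono (integrable_finset_sum _ (fun n _ => hIpsi n)) hbound_int ?_
    intro ω
    exact hpsum N (X 0 0 ω)
  -- measurability of Z with respect to past σ-algebras
  set past : ℕ → MeasurableSpace Ω :=
    fun n => ⨆ p ∈ {q : ℕ × ℕ | q.1 < n}, MeasurableSpace.comap (X p.1 p.2) inferInstance
    with hpastdef
  have hcomap_le : ∀ (p : ℕ × ℕ) n, p.1 < n →
      MeasurableSpace.comap (X p.1 p.2) inferInstance ≤ past n := by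
    intro p n hp
    exact le_iSup₂ (f := fun (p : ℕ × ℕ) (_ : p ∈ {q : ℕ × ℕ | q.1 < n}) =>
      MeasurableSpace.comap (X p.1 p.2) inferInstance) p hp
  have hpast_mono : ∀ a b : ℕ, a ≤ b → past a ≤ past b := by
    intro a b hab
    exact iSup₂_le fun p hp => hcomap_le p b (lt_of_lt_of_le hp hab)
  have hpast_le : ∀ n, past n ≤ ‹MeasurableSpace Ω› :=
    fun n => iSup₂_le fun p _ => (hmeas p.1 p.2).comap_le
  have hZpast : ∀ n, Measurable[past n] (Z n) := by
    intro n
    induction n with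
    | zero =>
      have h0 : Z 0 = fun _ => 1 := funext hZ0
      rw [h0]
      exact @measurable_const ℕ Ω _ (past 0) 1
    | succ n ih =>
      refine @measurable_to_countable' ℕ Ω _ _ (past (n+1)) _ (fun j => ?_)
      have hset : (Z (n+1)) ⁻¹' {j}
          = ⋃ k, ((Z n) ⁻¹' {k} ∩ {ω | (∑ i ∈ Finset.range k, X n i ω) = j}) := by
        ext ω
        simp only [Set.mem_preimage, Set.mem_singleton_iff, Set.mem_iUnion, Set.mem_inter_iff,
          Set.mem_setOf_eq]
        constructor
        · intro h; exact ⟨Z n ω, rfl, by rw [← hZrec n ω]; exact h⟩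
        · rintro ⟨k, hk, hsum⟩; rw [hZrec n ω, hk]; exact hsum
      rw [hset]
      refine MeasurableSet.iUnion (fun k => MeasurableSet.inter ?_ ?_)
      · exact hpast_mono n (n+1) (Nat.le_succ n) _ (ih (measurableSet_singleton k))
      · have hsum_meas : Measurable[past (n+1)] (fun ω => ∑ i ∈ Finset.range k, X n i ω) := by
          refine Finset.measurable_sum _ (fun i _ => ?_)
          exact measurable_iff_comap_le.mpr (hcomap_le (n, i) (n+1) (Nat.lt_succ_self n))
        exact hsum_meas (measurableSet_singleton j)
  have hZmeas : ∀ n, Measurable (Z n) := fun n => (hZpast n).mono (hpast_le n) le_rfl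
  have hrowmeas : ∀ n, Measurable (fun ω (i : ℕ) => X n i ω) :=
    fun n => measurable_pi_iff.mpr (hmeas n)
  -- independence of Z n from row n
  have hindep_row : ∀ n, IndepFun (Z n) (fun ω (i : ℕ) => X n i ω) P := by
    intro n
    have h_ii : iIndep (fun p : ℕ × ℕ => MeasurableSpace.comap (X p.1 p.2) inferInstance) P :=
      (iIndepFun_iff_iIndep _ _ _).mp hindep
    have hI := indep_biSup_compl (fun p : ℕ × ℕ => (hmeas p.1 p.2).comap_le) h_ii
      {q : ℕ × ℕ | q.1 < n}
    have h1 : MeasurableSpace.comap (Z n) inferInstance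
        ≤ ⨆ p ∈ {q : ℕ × ℕ | q.1 < n}, MeasurableSpace.comap (X p.1 p.2) inferInstance :=
      measurable_iff_comap_le.mp (hZpast n)
    have hrowm : Measurable[⨆ p ∈ ({q : ℕ × ℕ | q.1 < n}ᶜ),
        MeasurableSpace.comap (X p.1 p.2) inferInstance] (fun ω (i : ℕ) => X n i ω) := by
      refine @measurable_pi_lambda Ω ℕ (fun _ => ℕ)
        (⨆ p ∈ ({q : ℕ × ℕ | q.1 < n}ᶜ), MeasurableSpace.comap (X p.1 p.2) inferInstance)
        (fun _ => inferInstance) _ (fun i => ?_)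
      refine measurable_iff_comap_le.mpr ?_
      exact le_iSup₂ (f := fun (p : ℕ × ℕ) (_ : p ∈ ({q : ℕ × ℕ | q.1 < n}ᶜ)) =>
        MeasurableSpace.comap (X p.1 p.2) inferInstance) (n, i)
        (by simp [Set.mem_compl_iff, Set.mem_setOf_eq])
    have h2 := measurable_iff_comap_le.mp hrowm
    exact ProbabilityTheory.indep_of_indep_of_le_left
      (ProbabilityTheory.indep_of_indep_of_le_right hI h2) h1
  -- measurability of composites
  have hpt : ∀ (n : ℕ) (γ : ℕ → (ℕ → ℕ) → ℝ≥0∞) (ω : Ω),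
      γ (Z n ω) (fun i => X n i ω)
        = ∑' k, (if Z n ω = k then γ k (fun i => X n i ω) else 0) := by
    intro n γ ω
    rw [tsum_eq_single (Z n ω) (fun k hk => if_neg (Ne.symm hk))]
    simp
  have hγcomp : ∀ (n : ℕ) (γ : ℕ → (ℕ → ℕ) → ℝ≥0∞), (∀ k, Measurable (γ k)) →
      Measurable (fun ω => γ (Z n ω) (fun i => X n i ω)) := by
    intro n γ hγ
    have h1 : (fun ω => γ (Z n ω) (fun i => X n i ω))
        = fun ω => ∑' k, (if Z n ω = k then γ k (fun i => X n i ω) else 0) :=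
      funext (hpt n γ)
    rw [h1]
    exact Measurable.ennreal_tsum fun k =>
      Measurable.ite (hZmeas n (measurableSet_singleton k)) ((hγ k).comp (hrowmeas n))
        measurable_const
  -- master decomposition lemma
  have hML : ∀ (n : ℕ) (γ : ℕ → (ℕ → ℕ) → ℝ≥0∞), (∀ k, Measurable (γ k)) →
      ∫⁻ ω, γ (Z n ω) (fun i => X n i ω) ∂P
        = ∑' k, P {ω | Z n ω = k} * ∫⁻ ω, γ k (fun i => X n i ω) ∂P := by
    intro n γ hγ
    calc ∫⁻ ω, γ (Z n ω) (fun i => X n i ω) ∂P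
        = ∫⁻ ω, ∑' k, (if Z n ω = k then γ k (fun i => X n i ω) else 0) ∂P :=
          lintegral_congr (hpt n γ)
      _ = ∑' k, ∫⁻ ω, (if Z n ω = k then γ k (fun i => X n i ω) else 0) ∂P := by
          refine lintegral_tsum fun k => ?_
          exact (Measurable.ite (hZmeas n (measurableSet_singleton k))
            ((hγ k).comp (hrowmeas n)) measurable_const).aemeasurable
      _ = ∑' k, P {ω | Z n ω = k} * ∫⁻ ω, γ k (fun i => X n i ω) ∂P := by
          refine tsum_congr fun k => ?_
          have hite : (fun ω => (if Z n ω = k then γ k (fun i => X n i ω) else 0))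
              = ((fun k' : ℕ => if k' = k then (1:ℝ≥0∞) else 0) ∘ (Z n))
                * ((γ k) ∘ (fun ω (i : ℕ) => X n i ω)) := by
            funext ω
            by_cases h : Z n ω = k <;> simp [h, Function.comp]
          have hu : Measurable (fun k' : ℕ => if k' = k then (1:ℝ≥0∞) else 0) :=
            measurable_from_top
          have hmul := lintegral_mul_eq_lintegral_mul_lintegral_of_indepFun
            (μ := P) (f := (fun k' : ℕ => if k' = k then (1:ℝ≥0∞) else 0) ∘ (Z n))
            (g := (γ k) ∘ (fun ω (i : ℕ) => X n i ω))
            (hu.comp (hZmeas n)) ((hγ k).comp (hrowmeas n))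
            ((hindep_row n).comp hu (hγ k))
          have hind : ∫⁻ ω, ((fun k' : ℕ => if k' = k then (1:ℝ≥0∞) else 0) ∘ (Z n)) ω ∂P
              = P {ω | Z n ω = k} := by
            have h2 : ((fun k' : ℕ => if k' = k then (1:ℝ≥0∞) else 0) ∘ (Z n))
                = {ω | Z n ω = k}.indicator (fun _ => 1) := by
              funext ω
              by_cases h : Z n ω = k <;> simp [h, Set.indicator_apply, Function.comp]
            rw [h2, lintegral_indicator
              (show MeasurableSet {ω | Z n ω = k} from hZmeas n (measurableSet_singleton k)),
              setLIntegral_one]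
          rw [hite, hmul, hind]
          rfl
  -- lintegral transfer along identical distribution
  have hlid : ∀ (g : ℕ → ℝ≥0∞) (n i : ℕ),
      ∫⁻ ω, g (X n i ω) ∂P = ∫⁻ ω, g (X 0 0 ω) ∂P := by
    intro g n i
    rw [← lintegral_map measurable_from_top (hmeas n i), (hident n i).map_eq,
      lintegral_map measurable_from_top (hmeas 0 0)]
  have hlam00 : ∫⁻ ω, ((X 0 0 ω : ℕ) : ℝ≥0∞) ∂P = ENNReal.ofReal μ := by
    have h1 : (fun ω => ((X 0 0 ω : ℕ) : ℝ≥0∞)) = fun ω => ENNReal.ofReal ((X 0 0 ω : ℕ) : ℝ) := by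
      funext ω; rw [ENNReal.ofReal_natCast]
    rw [h1, ← ofReal_integral_eq_lintegral_ofReal hint
      (Filter.Eventually.of_forall fun ω => Nat.cast_nonneg _), hmean]
  -- counting identity and mean of Z n
  have hZcount : ∀ n, ∫⁻ ω, ((Z n ω : ℕ) : ℝ≥0∞) ∂P = ∑' k, P {ω | Z n ω = k} * k := by
    intro n
    have := hML n (fun k _ => (k : ℝ≥0∞)) (fun k => measurable_const)
    simpa [lintegral_const] using this
  have hZl : ∀ n, ∫⁻ ω, ((Z n ω : ℕ) : ℝ≥0∞) ∂P = (ENNReal.ofReal μ) ^ n := by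
    intro n
    induction n with
    | zero => simp [hZ0]
    | succ n ih =>
      have hγm : ∀ k : ℕ, Measurable (fun x : ℕ → ℕ => ∑ i ∈ Finset.range k, ((x i : ℕ) : ℝ≥0∞)) :=
        fun k => Finset.measurable_sum _ fun i _ =>
          measurable_from_top.comp (measurable_pi_apply i)
      have h1 : (fun ω => ((Z (n+1) ω : ℕ) : ℝ≥0∞))
          = fun ω => (fun k (x : ℕ → ℕ) => ∑ i ∈ Finset.range k, ((x i : ℕ) : ℝ≥0∞))
              (Z n ω) (fun i => X n i ω) := by
        funext ω
        rw [hZrec n ω]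
        push_cast
        rfl
      have h2 := hML n (fun k (x : ℕ → ℕ) => ∑ i ∈ Finset.range k, ((x i : ℕ) : ℝ≥0∞)) hγm
      have h3 : ∀ k : ℕ, ∫⁻ ω, (∑ i ∈ Finset.range k, ((X n i ω : ℕ) : ℝ≥0∞)) ∂P
          = (k : ℝ≥0∞) * ENNReal.ofReal μ := by
        intro k
        rw [lintegral_finset_sum _ (fun i _ =>
          show Measurable fun ω => ((X n i ω : ℕ) : ℝ≥0∞) from
            measurable_from_top.comp (hmeas n i))]
        have h4 : ∀ i, ∫⁻ ω, ((X n i ω : ℕ) : ℝ≥0∞) ∂P = ENNReal.ofReal μ :=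
          fun i => (hlid (fun j : ℕ => (j : ℝ≥0∞)) n i).trans hlam00
        simp [h4, Finset.sum_const, nsmul_eq_mul]
      rw [show (fun ω => ((Z (n+1) ω : ℕ) : ℝ≥0∞)) = _ from h1, h2]
      calc (∑' k, P {ω | Z n ω = k} * ∫⁻ ω,
              (fun k (x : ℕ → ℕ) => ∑ i ∈ Finset.range k, ((x i : ℕ) : ℝ≥0∞)) k
                (fun i => X n i ω) ∂P)
          = ∑' k, (P {ω | Z n ω = k} * k) * ENNReal.ofReal μ := by
            refine tsum_congr fun k => ?_
            rw [show (∫⁻ ω, (fun k (x : ℕ → ℕ) => ∑ i ∈ Finset.range k, ((x i : ℕ) : ℝ≥0∞)) k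
                (fun i => X n i ω) ∂P) = (k : ℝ≥0∞) * ENNReal.ofReal μ from h3 k, mul_assoc]
        _ = (∑' k, P {ω | Z n ω = k} * k) * ENNReal.ofReal μ := ENNReal.tsum_mul_right
        _ = (ENNReal.ofReal μ) ^ n * ENNReal.ofReal μ := by rw [← hZcount n, ih]
        _ = (ENNReal.ofReal μ) ^ (n + 1) := by rw [pow_succ]
  have hZtsum : ∀ n, (∑' k, P {ω | Z n ω = k} * k) = (ENNReal.ofReal μ) ^ n :=
    fun n => (hZcount n).symm.trans (hZl n)
  -- integrability and mean of W n
  have hcastZ : ∀ n, (fun ω => ((‖(Z n ω : ℝ)‖₊ : ℝ≥0∞))) = fun ω => ((Z n ω : ℕ) : ℝ≥0∞) := by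
    intro n
    funext ω
    rw [← enorm_eq_nnnorm, Real.enorm_eq_ofReal_abs, abs_of_nonneg (Nat.cast_nonneg _), ENNReal.ofReal_natCast]
  have hZRint : ∀ n, Integrable (fun ω => (Z n ω : ℝ)) P := by
    intro n
    refine ⟨(measurable_from_top.comp (hZmeas n)).aestronglyMeasurable, ?_⟩
    show (∫⁻ ω, ‖(Z n ω : ℝ)‖₊ ∂P) < ⊤
    rw [show (fun ω => ((‖(Z n ω : ℝ)‖₊ : ℝ≥0∞))) = fun ω => ((Z n ω : ℕ) : ℝ≥0∞) from hcastZ n,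
      hZl n]
    exact ENNReal.pow_lt_top ENNReal.ofReal_lt_top
  have hZRval : ∀ n, ∫ ω, (Z n ω : ℝ) ∂P = μ ^ n := by
    intro n
    rw [integral_eq_lintegral_of_nonneg_ae
      (Filter.Eventually.of_forall fun ω => Nat.cast_nonneg _)
      (measurable_from_top.comp (hZmeas n)).aestronglyMeasurable]
    have h1 : (fun ω => ENNReal.ofReal ((Z n ω : ℕ) : ℝ)) = fun ω => ((Z n ω : ℕ) : ℝ≥0∞) := by
      funext ω; rw [ENNReal.ofReal_natCast]
    rw [h1, hZl n, ← ENNReal.ofReal_pow hμ0.le, ENNReal.toReal_ofReal (by positivity)]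
  -- the increments
  set a : ℕ → ℝ := fun n =>
    (eps n * μ ^ n + Real.sqrt (μ ^ (n+1) * ν ^ n) + eps n * μ ^ n) * (1 / μ ^ (n+1)) with hadef
  have ha0 : ∀ n, 0 ≤ a n := by
    intro n
    simp only [hadef]
    have := heps0 n
    have h1 : 0 ≤ Real.sqrt (μ ^ (n+1) * ν ^ n) := Real.sqrt_nonneg _
    have h3 : (0:ℝ) ≤ μ ^ n := by positivity
    refine mul_nonneg (by nlinarith) (by positivity)
  have hdelta : ∀ n, ∫⁻ ω, ENNReal.ofReal |(Z (n+1) ω : ℝ) / μ ^ (n+1) - (Z n ω : ℝ) / μ ^ n| ∂P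
      ≤ ENNReal.ofReal (a n) := by
    intro n
    set γA : ℕ → (ℕ → ℕ) → ℝ≥0∞ :=
      fun k x => ∑ i ∈ Finset.range k, ENNReal.ofReal (ψ n (x i)) with hγAdef
    set γM : ℕ → (ℕ → ℕ) → ℝ≥0∞ :=
      fun k x => ENNReal.ofReal ((∑ i ∈ Finset.range k, φ n (x i) - em n * k) ^ 2) with hγMdef
    set γN : ℕ → (ℕ → ℕ) → ℝ≥0∞ :=
      fun k x => ENNReal.ofReal |∑ i ∈ Finset.range k, φ n (x i) - em n * k| with hγNdef
    have hγAm : ∀ k, Measurable (γA k) := by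
      intro k
      simp only [hγAdef]
      refine Finset.measurable_sum _ fun i _ => ?_
      exact ENNReal.measurable_ofReal.comp
        ((measurable_from_top (f := ψ n)).comp (measurable_pi_apply i))
    have hφxm : ∀ k : ℕ, Measurable (fun x : ℕ → ℕ =>
        ∑ i ∈ Finset.range k, φ n (x i) - em n * k) := by
      intro k
      refine Measurable.sub ?_ measurable_const
      refine Finset.measurable_sum _ fun i _ => ?_
      exact (measurable_from_top (f := φ n)).comp (measurable_pi_apply i)
    have hγMm : ∀ k, Measurable (γM k) := fun k =>
      ENNReal.measurable_ofReal.comp ((hφxm k).pow_const 2)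
    have hγNm : ∀ k, Measurable (γN k) := fun k =>
      ENNReal.measurable_ofReal.comp (hφxm k).abs
    set F₁ : Ω → ℝ≥0∞ := fun ω => γA (Z n ω) (fun i => X n i ω) with hF1def
    set F₂ : Ω → ℝ≥0∞ := fun ω => γN (Z n ω) (fun i => X n i ω) with hF2def
    set F₃ : Ω → ℝ≥0∞ := fun ω => ENNReal.ofReal (μ - em n) * ((Z n ω : ℕ) : ℝ≥0∞) with hF3def
    have hF1m : Measurable F₁ := hγcomp n γA hγAm
    have hF2m : Measurable F₂ := hγcomp n γN hγNm
    have hF3m : Measurable F₃ := (measurable_from_top.comp (hZmeas n)).const_mul _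
    -- pointwise bound
    have hptb : ∀ ω, ENNReal.ofReal |(Z (n+1) ω : ℝ) / μ ^ (n+1) - (Z n ω : ℝ) / μ ^ n|
        ≤ ENNReal.ofReal (1 / μ ^ (n+1)) * (F₁ ω + F₂ ω + F₃ ω) := by
      intro ω
      have hA0 : (0:ℝ) ≤ ∑ i ∈ Finset.range (Z n ω), ψ n (X n i ω) :=
        Finset.sum_nonneg fun i _ => hψ0 n _
      have hem_le' : em n ≤ μ := hem_le n
      have hdiff : (Z (n+1) ω : ℝ) / μ ^ (n+1) - (Z n ω : ℝ) / μ ^ n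
          = ((∑ i ∈ Finset.range (Z n ω), ψ n (X n i ω))
              + (∑ i ∈ Finset.range (Z n ω), φ n (X n i ω) - em n * (Z n ω))
              + (em n - μ) * (Z n ω)) * (1 / μ ^ (n+1)) := by
        have hZc : (Z (n+1) ω : ℝ) = ∑ i ∈ Finset.range (Z n ω), ((X n i ω : ℕ) : ℝ) := by
          rw [hZrec n ω]; push_cast; rfl
        have hsplit : (Z (n+1) ω : ℝ) = (∑ i ∈ Finset.range (Z n ω), ψ n (X n i ω))
            + (∑ i ∈ Finset.range (Z n ω), φ n (X n i ω)) := by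
          rw [hZc, ← Finset.sum_add_distrib]
          exact Finset.sum_congr rfl fun i _ => by rw [← hφψ n (X n i ω)]; ring
        rw [hsplit]
        have hμpow : (μ:ℝ) ^ (n+1) ≠ 0 := by positivity
        have hμpow' : (μ:ℝ) ^ n ≠ 0 := by positivity
        field_simp
        ring
      rw [hdiff]
      have habs : |((∑ i ∈ Finset.range (Z n ω), ψ n (X n i ω))
              + (∑ i ∈ Finset.range (Z n ω), φ n (X n i ω) - em n * (Z n ω))
              + (em n - μ) * (Z n ω)) * (1 / μ ^ (n+1))|
          ≤ (1 / μ ^ (n+1)) * ((∑ i ∈ Finset.range (Z n ω), ψ n (X n i ω))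
              + |∑ i ∈ Finset.range (Z n ω), φ n (X n i ω) - em n * (Z n ω)|
              + (μ - em n) * (Z n ω)) := by
        rw [abs_mul, abs_of_nonneg (show (0:ℝ) ≤ 1 / μ ^ (n+1) by positivity), mul_comm]
        refine mul_le_mul_of_nonneg_left ?_ (by positivity)
        calc |(∑ i ∈ Finset.range (Z n ω), ψ n (X n i ω))
              + (∑ i ∈ Finset.range (Z n ω), φ n (X n i ω) - em n * (Z n ω))
              + (em n - μ) * (Z n ω)|
            ≤ |∑ i ∈ Finset.range (Z n ω), ψ n (X n i ω)|
              + |∑ i ∈ Finset.range (Z n ω), φ n (X n i ω) - em n * (Z n ω)|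
              + |(em n - μ) * (Z n ω)| := abs_add_three _ _ _
          _ = (∑ i ∈ Finset.range (Z n ω), ψ n (X n i ω))
              + |∑ i ∈ Finset.range (Z n ω), φ n (X n i ω) - em n * (Z n ω)|
              + (μ - em n) * (Z n ω) := by
              rw [abs_of_nonneg hA0, abs_mul, abs_of_nonpos (by linarith : em n - μ ≤ 0),
                abs_of_nonneg (show (0:ℝ) ≤ ((Z n ω : ℕ):ℝ) from Nat.cast_nonneg _)]
              ring
      calc ENNReal.ofReal |((∑ i ∈ Finset.range (Z n ω), ψ n (X n i ω))
              + (∑ i ∈ Finset.range (Z n ω), φ n (X n i ω) - em n * (Z n ω))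
              + (em n - μ) * (Z n ω)) * (1 / μ ^ (n+1))|
          ≤ ENNReal.ofReal ((1 / μ ^ (n+1)) * ((∑ i ∈ Finset.range (Z n ω), ψ n (X n i ω))
              + |∑ i ∈ Finset.range (Z n ω), φ n (X n i ω) - em n * (Z n ω)|
              + (μ - em n) * (Z n ω))) := ENNReal.ofReal_le_ofReal habs
        _ = ENNReal.ofReal (1 / μ ^ (n+1)) * (F₁ ω + F₂ ω + F₃ ω) := by
            rw [ENNReal.ofReal_mul (by positivity),
              ENNReal.ofReal_add (by positivity) (mul_nonneg (by linarith) (Nat.cast_nonneg _)),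
              ENNReal.ofReal_add hA0 (abs_nonneg _)]
            have e1 : ENNReal.ofReal (∑ i ∈ Finset.range (Z n ω), ψ n (X n i ω)) = F₁ ω := by
              simp only [hF1def, hγAdef]
              exact ENNReal.ofReal_sum_of_nonneg fun i _ => hψ0 n _
            have e2 : ENNReal.ofReal |∑ i ∈ Finset.range (Z n ω), φ n (X n i ω)
                - em n * ((Z n ω : ℕ) : ℝ)| = F₂ ω := by
              simp only [hF2def, hγNdef]
            have e3 : ENNReal.ofReal ((μ - em n) * ((Z n ω : ℕ) : ℝ)) = F₃ ω := by
              simp only [hF3def]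
              rw [ENNReal.ofReal_mul (by linarith), ENNReal.ofReal_natCast]
            rw [e1, e2, e3]
    -- value of F₁
    have hF1val : ∫⁻ ω, F₁ ω ∂P = ENNReal.ofReal (eps n) * (ENNReal.ofReal μ) ^ n := by
      simp only [hF1def]
      rw [hML n γA hγAm]
      have hk : ∀ k : ℕ, ∫⁻ ω, γA k (fun i => X n i ω) ∂P
          = (k : ℝ≥0∞) * ENNReal.ofReal (eps n) := by
        intro k
        simp only [hγAdef]
        rw [lintegral_finset_sum _ (fun i _ =>
          show Measurable fun ω => ENNReal.ofReal (ψ n (X n i ω)) from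
            ENNReal.measurable_ofReal.comp (hXmeasR (ψ n) n i))]
        have hperi : ∀ i, ∫⁻ ω, ENNReal.ofReal (ψ n (X n i ω)) ∂P = ENNReal.ofReal (eps n) := by
          intro i
          rw [hlid (fun j => ENNReal.ofReal (ψ n j)) n i,
            ← ofReal_integral_eq_lintegral_ofReal (hIpsi n)
              (Filter.Eventually.of_forall fun ω => hψ0 n _)]
        simp [hperi, Finset.sum_const, nsmul_eq_mul]
      calc (∑' k, P {ω | Z n ω = k} * ∫⁻ ω, γA k (fun i => X n i ω) ∂P)
          = ∑' k, (P {ω | Z n ω = k} * k) * ENNReal.ofReal (eps n) := by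
            refine tsum_congr fun k => ?_
            rw [hk k, mul_assoc]
        _ = (∑' k, P {ω | Z n ω = k} * k) * ENNReal.ofReal (eps n) := ENNReal.tsum_mul_right
        _ = ENNReal.ofReal (eps n) * (ENNReal.ofReal μ) ^ n := by rw [hZtsum n, mul_comm]
    -- value of F₃
    have hF3val : ∫⁻ ω, F₃ ω ∂P = ENNReal.ofReal (eps n) * (ENNReal.ofReal μ) ^ n := by
      simp only [hF3def]
      rw [lintegral_const_mul _ (show Measurable fun ω => ((Z n ω : ℕ) : ℝ≥0∞) from
        measurable_from_top.comp (hZmeas n)), hZl n, heps_eq n]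
    -- second moment bound for F₂
    have hV3 : ∀ k : ℕ, ∫⁻ ω, γM k (fun i => X n i ω) ∂P
        ≤ ENNReal.ofReal ((k : ℝ) * (ν ^ n * μ)) := by
      intro k
      set c : ℕ → Ω → ℝ := fun i ω => φ n (X n i ω) - em n with hcdef2
      have hcm : ∀ i, Measurable (c i) := fun i => (hXmeasR (φ n) n i).sub measurable_const
      have hbnd : ∀ i ω, |c i ω| ≤ ν ^ n + |em n| := by
        intro i ω
        calc |c i ω| ≤ |φ n (X n i ω)| + |em n| := abs_sub _ _
          _ ≤ ν ^ n + |em n| := by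
              have := hφ0 n (X n i ω); have := hφle n (X n i ω)
              rw [abs_of_nonneg ‹0 ≤ φ n (X n i ω)›]
              linarith
      have hcint : ∀ i, Integrable (c i) P := fun i =>
        Integrable.mono' (integrable_const _) (hcm i).aestronglyMeasurable
          (Filter.Eventually.of_forall fun ω => by
            rw [Real.norm_eq_abs]; exact hbnd i ω)
      have hprod_int : ∀ i j, Integrable (fun ω => c i ω * c j ω) P := by
        intro i j
        refine Integrable.mono' (integrable_const ((ν ^ n + |em n|) ^ 2))
          ((hcm i).mul (hcm j)).aestronglyMeasurable
          (Filter.Eventually.of_forall fun ω => ?_)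
        rw [Real.norm_eq_abs, abs_mul]
        have h1 := hbnd i ω; have h2 := hbnd j ω
        have h3 := abs_nonneg (c i ω); have h4 := abs_nonneg (c j ω)
        nlinarith
      have hci0 : ∀ i, ∫ ω, c i ω ∂P = 0 := by
        intro i
        have h1 : Integrable (fun ω => φ n (X n i ω)) P :=
          (hident' (φ n) n i).integrable_iff.mpr (hIphi n)
        have h2 : ∫ ω, c i ω ∂P = (∫ ω, φ n (X n i ω) ∂P) - em n := by
          rw [hcdef2]
          rw [integral_sub h1 (integrable_const _)]
          simp
        rw [h2, (hident' (φ n) n i).integral_eq]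
        simp [hemdef]
      set s2 : ℝ := ∫ ω, (φ n (X 0 0 ω) - em n) ^ 2 ∂P with hs2def
      have hcii : ∀ i, ∫ ω, c i ω * c i ω ∂P = s2 := by
        intro i
        have h1 := (hident' (fun j => (φ n j - em n) ^ 2) n i).integral_eq
        calc ∫ ω, c i ω * c i ω ∂P = ∫ ω, (φ n (X n i ω) - em n) ^ 2 ∂P := by
              refine integral_congr_ae (Filter.Eventually.of_forall fun ω => ?_)
              rw [hcdef2]; ring
          _ = s2 := by rw [hs2def]; exact h1
      have hcij : ∀ i j, i ≠ j → ∫ ω, c i ω * c j ω ∂P = 0 := by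
        intro i j hij
        have hXij : IndepFun (X n i) (X n j) P :=
          hindep.indepFun (show ((n,i) : ℕ × ℕ) ≠ (n,j) by simp [Prod.ext_iff, hij])
        have hcij' : IndepFun (c i) (c j) P :=
          hXij.comp (measurable_from_top : Measurable fun l : ℕ => φ n l - em n)
            (measurable_from_top : Measurable fun l : ℕ => φ n l - em n)
        have h1 := hcij'.integral_mul_eq_mul_integral (hcint i).aestronglyMeasurable (hcint j).aestronglyMeasurable
        have h2 : ∫ ω, c i ω * c j ω ∂P = ∫ ω, (c i * c j) ω ∂P := rfl
        rw [h2, h1, hci0 i, hci0 j, mul_zero]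
      have hIphi2 : Integrable (fun ω => φ n (X 0 0 ω) * φ n (X 0 0 ω)) P := by
        refine Integrable.mono' (integrable_const (ν ^ n * ν ^ n))
          ((hXmeasR (φ n) 0 0).mul (hXmeasR (φ n) 0 0)).aestronglyMeasurable
          (Filter.Eventually.of_forall fun ω => ?_)
        rw [Real.norm_eq_abs, abs_mul, abs_of_nonneg (hφ0 n _)]
        have h1 := hφ0 n (X 0 0 ω); have h2 := hφle n (X 0 0 ω)
        nlinarith
      have hs2le : s2 ≤ ν ^ n * μ := by
        have hexp : s2 = (∫ ω, φ n (X 0 0 ω) * φ n (X 0 0 ω) ∂P) - em n * em n := by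
          rw [hs2def]
          have hpt2 : ∀ ω, (φ n (X 0 0 ω) - em n) ^ 2
              = (φ n (X 0 0 ω) * φ n (X 0 0 ω) - 2 * em n * φ n (X 0 0 ω)) + em n * em n :=
            fun ω => by ring
          rw [integral_congr_ae (Filter.Eventually.of_forall hpt2),
            integral_add (show Integrable (fun ω => φ n (X 0 0 ω) * φ n (X 0 0 ω)
                - 2 * em n * φ n (X 0 0 ω)) P from hIphi2.sub ((hIphi n).const_mul _))
              (integrable_const _),
            integral_sub hIphi2 (show Integrable (fun ω => 2 * em n * φ n (X 0 0 ω)) P from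
              (hIphi n).const_mul _),
            integral_const_mul, integral_const]
          simp [hemdef]
          ring
        have hphisq : (∫ ω, φ n (X 0 0 ω) * φ n (X 0 0 ω) ∂P) ≤ ν ^ n * em n := by
          have h3 : (∫ ω, φ n (X 0 0 ω) * φ n (X 0 0 ω) ∂P) ≤ ∫ ω, ν ^ n * φ n (X 0 0 ω) ∂P := by
            refine integral_mono hIphi2 ((hIphi n).const_mul _) fun ω => ?_
            have h1 := hφ0 n (X 0 0 ω); have h2 := hφle n (X 0 0 ω)
            nlinarith
          rw [integral_const_mul] at h3
          exact h3
        have h5 := hem0 n; have h6 := hem_le n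
        have h7 : (0:ℝ) ≤ ν ^ n := by positivity
        nlinarith
      have hexp2 : ∀ ω, (∑ i ∈ Finset.range k, c i ω) ^ 2
          = ∑ i ∈ Finset.range k, ∑ j ∈ Finset.range k, c i ω * c j ω := by
        intro ω; rw [sq, Finset.sum_mul_sum]
      have hIF2base : Integrable
          (fun ω => ∑ i ∈ Finset.range k, ∑ j ∈ Finset.range k, c i ω * c j ω) P :=
        integrable_finset_sum _ (fun i _ => integrable_finset_sum _ (fun j _ => hprod_int i j))
      have hFsum : ∫ ω, (∑ i ∈ Finset.range k, c i ω) ^ 2 ∂P = (k : ℝ) * s2 := by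
        rw [integral_congr_ae (Filter.Eventually.of_forall hexp2),
          integral_finset_sum _ (fun i _ => integrable_finset_sum _ (fun j _ => hprod_int i j))]
        have hinner : ∀ i ∈ Finset.range k,
            (∫ ω, ∑ j ∈ Finset.range k, c i ω * c j ω ∂P) = s2 := by
          intro i hi
          rw [integral_finset_sum _ (fun j _ => hprod_int i j)]
          have : ∀ j ∈ Finset.range k, (∫ ω, c i ω * c j ω ∂P)
              = if j = i then s2 else 0 := by
            intro j _
            by_cases h : j = i
            · subst h; simp [hcii j]
            · simp [h, hcij i j (fun hh => h hh.symm)]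
          rw [Finset.sum_congr rfl this, Finset.sum_ite_eq' (Finset.range k) i (fun _ => s2)]
          simp [Finset.mem_range.mp hi]
        rw [Finset.sum_congr rfl hinner, Finset.sum_const, Finset.card_range, nsmul_eq_mul]
      have hmatch : (fun ω => γM k (fun i => X n i ω))
          = fun ω => ENNReal.ofReal ((∑ i ∈ Finset.range k, c i ω) ^ 2) := by
        funext ω
        simp only [hγMdef, hcdef2]
        congr 1
        rw [Finset.sum_sub_distrib, Finset.sum_const, Finset.card_range, nsmul_eq_mul]
        ring
      have hIF2 : Integrable (fun ω => (∑ i ∈ Finset.range k, c i ω) ^ 2) P :=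
        hIF2base.congr (Filter.Eventually.of_forall fun ω => (hexp2 ω).symm)
      rw [hmatch, ← ofReal_integral_eq_lintegral_ofReal hIF2
        (Filter.Eventually.of_forall fun ω => sq_nonneg _), hFsum]
      refine ENNReal.ofReal_le_ofReal ?_
      have := Nat.cast_nonneg (α := ℝ) k
      nlinarith
    -- variance bound for F₂ squared
    have hF2sq : ∫⁻ ω, F₂ ω ^ (2:ℝ) ∂P ≤ ENNReal.ofReal (μ ^ (n+1) * ν ^ n) := by
      have hpt2 : ∀ ω, F₂ ω ^ (2:ℝ) = γM (Z n ω) (fun i => X n i ω) := by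
        intro ω
        simp only [hF2def, hγNdef, hγMdef]
        rw [ENNReal.ofReal_rpow_of_nonneg (abs_nonneg _) (by norm_num)]
        congr 1
        rw [show ((2:ℝ) = ((2:ℕ):ℝ)) by norm_num, Real.rpow_natCast, sq_abs]
      rw [lintegral_congr hpt2, hML n γM hγMm]
      calc (∑' k, P {ω | Z n ω = k} * ∫⁻ ω, γM k (fun i => X n i ω) ∂P)
          ≤ ∑' k, P {ω | Z n ω = k} * ((k : ℝ≥0∞) * ENNReal.ofReal (ν ^ n * μ)) := by
            refine ENNReal.tsum_le_tsum fun k => mul_le_mul_right ?_ _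
            refine (hV3 k).trans_eq ?_
            rw [ENNReal.ofReal_mul (Nat.cast_nonneg k), ENNReal.ofReal_natCast]
        _ = (∑' k, P {ω | Z n ω = k} * k) * ENNReal.ofReal (ν ^ n * μ) := by
            rw [← ENNReal.tsum_mul_right]
            exact tsum_congr fun k => by rw [mul_assoc]
        _ = ENNReal.ofReal (μ ^ (n+1) * ν ^ n) := by
            rw [hZtsum n, ← ENNReal.ofReal_pow hμ0.le, ← ENNReal.ofReal_mul (by positivity)]
            congr 1
            ring
    -- L¹ bound for F₂ via Cauchy–Schwarz
    have hF2val : ∫⁻ ω, F₂ ω ∂P ≤ ENNReal.ofReal (Real.sqrt (μ ^ (n+1) * ν ^ n)) := by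
      have h2 : (2:ℝ).HolderConjugate 2 := Real.HolderConjugate.two_two
      have hH := ENNReal.lintegral_mul_le_Lp_mul_Lq P h2 hF2m.aemeasurable
        (aemeasurable_const (b := (1:ℝ≥0∞))) (g := fun _ => 1)
      have hH' : ∫⁻ ω, F₂ ω ∂P ≤ (∫⁻ ω, F₂ ω ^ (2:ℝ) ∂P) ^ (1/2 : ℝ) := by simpa using hH
      calc ∫⁻ ω, F₂ ω ∂P ≤ (∫⁻ ω, F₂ ω ^ (2:ℝ) ∂P) ^ (1/2 : ℝ) := hH'
        _ ≤ (ENNReal.ofReal (μ ^ (n+1) * ν ^ n)) ^ (1/2 : ℝ) :=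
            ENNReal.rpow_le_rpow hF2sq (by norm_num)
        _ = ENNReal.ofReal ((μ ^ (n+1) * ν ^ n) ^ (1/2 : ℝ)) :=
            ENNReal.ofReal_rpow_of_nonneg (by positivity) (by norm_num)
        _ = ENNReal.ofReal (Real.sqrt (μ ^ (n+1) * ν ^ n)) := by
            rw [Real.sqrt_eq_rpow]
    -- put everything together
    calc ∫⁻ ω, ENNReal.ofReal |(Z (n+1) ω : ℝ) / μ ^ (n+1) - (Z n ω : ℝ) / μ ^ n| ∂P
        ≤ ∫⁻ ω, ENNReal.ofReal (1 / μ ^ (n+1)) * (F₁ ω + F₂ ω + F₃ ω) ∂P :=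
          lintegral_mono hptb
      _ = ENNReal.ofReal (1 / μ ^ (n+1)) * ∫⁻ ω, (F₁ ω + F₂ ω + F₃ ω) ∂P :=
          lintegral_const_mul _ ((hF1m.add hF2m).add hF3m)
      _ = ENNReal.ofReal (1 / μ ^ (n+1))
            * ((∫⁻ ω, F₁ ω ∂P) + (∫⁻ ω, F₂ ω ∂P) + (∫⁻ ω, F₃ ω ∂P)) := by
          rw [lintegral_add_left (f := fun ω => F₁ ω + F₂ ω) (hF1m.add hF2m), lintegral_add_left hF1m]
      _ ≤ ENNReal.ofReal (1 / μ ^ (n+1))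
            * (ENNReal.ofReal (eps n) * (ENNReal.ofReal μ) ^ n
              + ENNReal.ofReal (Real.sqrt (μ ^ (n+1) * ν ^ n))
              + ENNReal.ofReal (eps n) * (ENNReal.ofReal μ) ^ n) := by
          refine mul_le_mul_right ?_ _
          exact add_le_add (add_le_add (le_of_eq hF1val) hF2val) (le_of_eq hF3val)
      _ = ENNReal.ofReal (a n) := by
          rw [← ENNReal.ofReal_pow hμ0.le, ← ENNReal.ofReal_mul (heps0 n),
            ← ENNReal.ofReal_add (mul_nonneg (heps0 n) (by positivity)) (Real.sqrt_nonneg _),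
            ← ENNReal.ofReal_add (add_nonneg (mul_nonneg (heps0 n) (by positivity))
              (Real.sqrt_nonneg _)) (mul_nonneg (heps0 n) (by positivity)),
            ← ENNReal.ofReal_mul (by positivity)]
          rw [hadef]
          congr 1
          ring
  have haSummable : Summable a := by
    have hq0 : (0:ℝ) ≤ Real.sqrt (ν / μ) := Real.sqrt_nonneg _
    have hq1 : Real.sqrt (ν / μ) < 1 := by
      have h1 : ν / μ < 1 := (div_lt_one hμ0).mpr hνμ
      nlinarith [Real.sq_sqrt (show (0:ℝ) ≤ ν/μ by positivity), Real.sqrt_nonneg (ν/μ)]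
    have ha_eq : ∀ n, a n = (2 / μ) * eps n + Real.sqrt (1/μ) * (Real.sqrt (ν / μ)) ^ n := by
      intro n
      have hsq : Real.sqrt (μ ^ (n+1) * ν ^ n) * (1 / μ ^ (n+1))
          = Real.sqrt (1/μ) * (Real.sqrt (ν / μ)) ^ n := by
        have e1 : (1/μ^(n+1)) = Real.sqrt ((1/μ^(n+1))^2) :=
          (Real.sqrt_sq (by positivity)).symm
        rw [e1, ← Real.sqrt_mul (show (0:ℝ) ≤ μ^(n+1)*ν^n by positivity) ((1/μ^(n+1))^2),
          ← sqrt_pow' (ν/μ) (by positivity) n,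
          ← Real.sqrt_mul (show (0:ℝ) ≤ 1/μ by positivity) ((ν/μ)^n)]
        congr 1
        field_simp
        rw [div_pow, pow_succ, mul_div_assoc', eq_div_iff (by positivity)]
        ring
      simp only [hadef]
      rw [show (eps n * μ^n + Real.sqrt (μ^(n+1) * ν^n) + eps n * μ^n) * (1/μ^(n+1))
          = 2 * (eps n * (μ^n / μ^(n+1))) + Real.sqrt (μ^(n+1) * ν^n) * (1/μ^(n+1)) by ring]
      rw [hsq]
      have hr : μ^n / μ^(n+1) = 1/μ := by
        rw [pow_succ]
        field_simp
      rw [hr]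
      ring
    exact ((hepsSummable.mul_left (2/μ)).add
      ((summable_geometric_of_lt_one hq0 hq1).mul_left (Real.sqrt (1/μ)))).congr
      (fun n => (ha_eq n).symm)
  -- tail bounds
  set t : ℕ → ℝ := fun n => ∑' k, a (k + n) with htdef
  have ht0 : Tendsto t atTop (𝓝 0) := tendsto_sum_nat_add a
  have htnn : ∀ n, 0 ≤ t n :=
    fun n => tsum_nonneg (fun k => ha0 _)
  have hWnmeas : ∀ n, Measurable (fun ω => (Z n ω : ℝ) / μ ^ n) :=
    fun n => (measurable_from_top.comp (hZmeas n)).div_const _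
  have hcauchy : ∀ n, ∫⁻ ω, ENNReal.ofReal |W ω - (Z n ω : ℝ) / μ ^ n| ∂P
      ≤ ENNReal.ofReal (t n) := by
    intro n
    have hbound : ∀ m, n ≤ m →
        ∫⁻ ω, ENNReal.ofReal |(Z m ω : ℝ)/μ^m - (Z n ω : ℝ)/μ^n| ∂P ≤ ENNReal.ofReal (t n) := by
      intro m hm
      have htel : ∀ ω : Ω, (Z m ω : ℝ)/μ^m - (Z n ω : ℝ)/μ^n
          = ∑ k ∈ Finset.Ico n m, ((Z (k+1) ω : ℝ)/μ^(k+1) - (Z k ω : ℝ)/μ^k) := by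
        intro ω
        rw [Finset.sum_Ico_eq_sub _ hm, Finset.sum_range_sub (fun k => (Z k ω : ℝ)/μ^k),
          Finset.sum_range_sub (fun k => (Z k ω : ℝ)/μ^k)]
        ring
      calc ∫⁻ ω, ENNReal.ofReal |(Z m ω : ℝ)/μ^m - (Z n ω : ℝ)/μ^n| ∂P
          ≤ ∫⁻ ω, ∑ k ∈ Finset.Ico n m,
              ENNReal.ofReal |(Z (k+1) ω : ℝ)/μ^(k+1) - (Z k ω : ℝ)/μ^k| ∂P := by
            refine lintegral_mono fun ω => ?_
            rw [htel ω]
            calc ENNReal.ofReal |∑ k ∈ Finset.Ico n m,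
                  ((Z (k+1) ω : ℝ)/μ^(k+1) - (Z k ω : ℝ)/μ^k)|
                ≤ ENNReal.ofReal (∑ k ∈ Finset.Ico n m,
                    |(Z (k+1) ω : ℝ)/μ^(k+1) - (Z k ω : ℝ)/μ^k|) :=
                  ENNReal.ofReal_le_ofReal (Finset.abs_sum_le_sum_abs _ _)
              _ = ∑ k ∈ Finset.Ico n m,
                    ENNReal.ofReal |(Z (k+1) ω : ℝ)/μ^(k+1) - (Z k ω : ℝ)/μ^k| :=
                  ENNReal.ofReal_sum_of_nonneg (fun k _ => abs_nonneg _)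
        _ = ∑ k ∈ Finset.Ico n m,
              ∫⁻ ω, ENNReal.ofReal |(Z (k+1) ω : ℝ)/μ^(k+1) - (Z k ω : ℝ)/μ^k| ∂P :=
            lintegral_finset_sum _ (fun k _ =>
              ENNReal.measurable_ofReal.comp ((hWnmeas (k+1)).sub (hWnmeas k)).abs)
        _ ≤ ∑ k ∈ Finset.Ico n m, ENNReal.ofReal (a k) :=
            Finset.sum_le_sum fun k _ => hdelta k
        _ = ENNReal.ofReal (∑ k ∈ Finset.Ico n m, a k) :=
            (ENNReal.ofReal_sum_of_nonneg fun k _ => ha0 k).symm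
        _ ≤ ENNReal.ofReal (t n) := by
            refine ENNReal.ofReal_le_ofReal ?_
            rw [htdef, Finset.sum_Ico_eq_sum_range]
            have hsum : Summable (fun k => a (k + n)) := (summable_nat_add_iff n).mpr haSummable
            calc (∑ k ∈ Finset.range (m - n), a (n + k))
                = ∑ k ∈ Finset.range (m - n), a (k + n) :=
                  Finset.sum_congr rfl fun k _ => by rw [add_comm]
              _ ≤ ∑' k, a (k + n) := Summable.sum_le_tsum _ (fun k _ => ha0 _) hsum
    have haem : ∀ m : ℕ, Measurable (fun ω => ENNReal.ofReal |(Z m ω:ℝ)/μ^m - (Z n ω:ℝ)/μ^n|) :=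
      fun m => ENNReal.measurable_ofReal.comp ((hWnmeas m).sub (hWnmeas n)).abs
    have hae : ∀ᵐ ω ∂P, ENNReal.ofReal |W ω - (Z n ω:ℝ)/μ^n|
        = liminf (fun m => ENNReal.ofReal |(Z m ω:ℝ)/μ^m - (Z n ω:ℝ)/μ^n|) atTop := by
      filter_upwards [hW] with ω hω
      have hten : Tendsto (fun m => ENNReal.ofReal |(Z m ω:ℝ)/μ^m - (Z n ω:ℝ)/μ^n|) atTop
          (𝓝 (ENNReal.ofReal |W ω - (Z n ω:ℝ)/μ^n|)) := by
        have h1 : Tendsto (fun m => (Z m ω:ℝ)/μ^m - (Z n ω:ℝ)/μ^n) atTop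
            (𝓝 (W ω - (Z n ω:ℝ)/μ^n)) := hω.sub_const _
        exact (ENNReal.continuous_ofReal.tendsto _).comp h1.abs
      exact hten.liminf_eq.symm
    calc ∫⁻ ω, ENNReal.ofReal |W ω - (Z n ω:ℝ)/μ^n| ∂P
        = ∫⁻ ω, liminf (fun m => ENNReal.ofReal |(Z m ω:ℝ)/μ^m - (Z n ω:ℝ)/μ^n|) atTop ∂P :=
          lintegral_congr_ae hae
      _ ≤ liminf (fun m => ∫⁻ ω, ENNReal.ofReal |(Z m ω:ℝ)/μ^m - (Z n ω:ℝ)/μ^n| ∂P) atTop :=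
          lintegral_liminf_le haem
      _ ≤ ENNReal.ofReal (t n) := by
          refine Filter.liminf_le_of_frequently_le' ?_
          refine Filter.Eventually.frequently ?_
          filter_upwards [Filter.eventually_ge_atTop n] with m hm
          exact hbound m hm
  -- conclusion
  have hWaem : AEMeasurable W P :=
    aemeasurable_of_tendsto_metrizable_ae' (fun n => (hWnmeas n).aemeasurable) hW
  have hWsubint : ∀ n, Integrable (fun ω => W ω - (Z n ω : ℝ) / μ ^ n) P := by
    intro n
    refine ⟨(hWaem.sub (hWnmeas n).aemeasurable).aestronglyMeasurable, ?_⟩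
    show (∫⁻ ω, ‖W ω - (Z n ω : ℝ) / μ ^ n‖₊ ∂P) < ⊤
    calc ∫⁻ ω, (‖W ω - (Z n ω : ℝ) / μ ^ n‖₊ : ℝ≥0∞) ∂P
        = ∫⁻ ω, ENNReal.ofReal |W ω - (Z n ω : ℝ) / μ ^ n| ∂P := by
          simp_rw [← enorm_eq_nnnorm, Real.enorm_eq_ofReal_abs]
      _ ≤ ENNReal.ofReal (t n) := hcauchy n
      _ < ⊤ := ENNReal.ofReal_lt_top
  have hWnint : ∀ n, Integrable (fun ω => (Z n ω : ℝ) / μ ^ n) P :=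
    fun n => (hZRint n).div_const _
  have hWint : Integrable W P := by
    have h := (hWsubint 0).add (hWnint 0)
    refine h.congr (Filter.Eventually.of_forall fun ω => ?_)
    simp
  have hWnval : ∀ n, ∫ ω, (Z n ω : ℝ) / μ ^ n ∂P = 1 := by
    intro n
    rw [integral_div, hZRval n]
    field_simp
  have key : ∀ n, |∫ ω, W ω ∂P - 1| ≤ t n := by
    intro n
    have h1 : ∫ ω, W ω ∂P - 1 = ∫ ω, (W ω - (Z n ω : ℝ) / μ ^ n) ∂P := by
      rw [integral_sub hWint (hWnint n), hWnval n]
    rw [h1, ← Real.norm_eq_abs]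
    calc ‖∫ ω, (W ω - (Z n ω : ℝ) / μ ^ n) ∂P‖
        ≤ (∫⁻ ω, ENNReal.ofReal ‖W ω - (Z n ω : ℝ) / μ ^ n‖ ∂P).toReal :=
          norm_integral_le_lintegral_norm _
      _ ≤ t n := by
          refine ENNReal.toReal_le_of_le_ofReal (htnn n) ?_
          simp_rw [Real.norm_eq_abs]
          exact hcauchy n
  have habs : |∫ ω, W ω ∂P - 1| ≤ 0 :=
    ge_of_tendsto ht0 (Filter.Eventually.of_forall key)
  have := abs_nonneg (∫ ω, W ω ∂P - 1)
  have : |∫ ω, W ω ∂P - 1| = 0 := le_antisymm habs this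
  have := abs_eq_zero.mp this
  linarith
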